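/- Let C = (ζ_0, …, ζ_{p−1}) be a cycle of length p in 𝕋^d with the ζ_j pairwise distinct. Then the map î_C : ℝ^d × ℤ/pℤ → S_A(C) defined by î_C(x, j) = σ_A^{−j}(χ_C) + î(x) is a bijection, and it satisfies î_C(A^T x, j − 1) = σ_A(î_C(x, j)) for all x ∈ ℝ^d and j ∈ ℤ/pℤ. -/

import Mathlib

open Matrix MeasureTheory Filter Topology

noncomputable section

/-- The integer lattice ℤ^d inside ℝ^d. -/
def intLattice (d : ℕ) : AddSubgroup (Fin d → ℝ) where
  carrier := {x | ∀ i, ∃ k : ℤ, x i = (k : ℝ)}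
  zero_mem' := fun i => ⟨0, by simp⟩
  add_mem' := by
    intro x y hx hy i
    obtain ⟨a, ha⟩ := hx i
    obtain ⟨b, hb⟩ := hy i
    exact ⟨a + b, by simp [ha, hb]⟩
  neg_mem' := by
    intro x hx i
    obtain ⟨a, ha⟩ := hx i
    exact ⟨-a, by simp [ha]⟩

/-- The torus ℝ^d / ℤ^d. -/
abbrev Torus (d : ℕ) := (Fin d → ℝ) ⧸ intLattice d

/-- The quotient homomorphism π : ℝ^d → 𝕋^d. -/
def torusMk (d : ℕ) : (Fin d → ℝ) →+ Torus d := QuotientAddGroup.mk' (intLattice d)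

/-- A square integer matrix is expansive if all of its complex eigenvalues `μ`
satisfy `|μ| > 1`. -/
def Expansive {d : ℕ} (A : Matrix (Fin d) (Fin d) ℤ) : Prop :=
  ∀ μ : ℂ, (Matrix.charpoly (A.map (Int.cast : ℤ → ℂ))).IsRoot μ → 1 < ‖μ‖

/-- The real matrix associated to an integer matrix. -/
def toR {d : ℕ} (A : Matrix (Fin d) (Fin d) ℤ) : Matrix (Fin d) (Fin d) ℝ :=
  A.map (Int.cast : ℤ → ℝ)

lemma latticeMap_aux {d : ℕ} (M : Matrix (Fin d) (Fin d) ℤ) :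
    intLattice d ≤ (intLattice d).comap (toR M).mulVecLin.toAddMonoidHom := by
  intro x hx
  choose k hk using hx
  intro i
  refine ⟨∑ j, M i j * k j, ?_⟩
  have : (toR M).mulVecLin.toAddMonoidHom x i = ∑ j, (M i j : ℝ) * (k j : ℝ) := by
    simp [toR, Matrix.mulVec, dotProduct, hk, Matrix.map_apply]
  rw [this]
  push_cast
  ring

/-- The endomorphism of the torus induced by an integer matrix. -/
def torusHom {d : ℕ} (M : Matrix (Fin d) (Fin d) ℤ) : Torus d →+ Torus d :=
  QuotientAddGroup.map _ _ (toR M).mulVecLin.toAddMonoidHom (latticeMap_aux M)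

/-- The solenoid `S_A`, as an additive subgroup of `(𝕋^d)^ℕ`. -/
def solenoid {d : ℕ} (A : Matrix (Fin d) (Fin d) ℤ) : AddSubgroup (ℕ → Torus d) where
  carrier := {z | ∀ n, torusHom Aᵀ (z (n + 1)) = z n}
  zero_mem' := by intro n; simp
  add_mem' := by
    intro a b ha hb n
    simp only [Pi.add_apply, map_add, ha n, hb n]
  neg_mem' := by
    intro a ha n
    simp only [Pi.neg_apply, map_neg, ha n]

/-- The shift automorphism σ_A of the solenoid (written on the ambient space). -/
def sigmaA {d : ℕ} (A : Matrix (Fin d) (Fin d) ℤ) (z : ℕ → Torus d) : ℕ → Torus d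
  | 0 => torusHom Aᵀ (z 0)
  | n + 1 => z n

/-- The embedding î : ℝ^d → S_A, î(x) = (π((Aᵀ)^{-n} x))ₙ. -/
def ihat {d : ℕ} (A : Matrix (Fin d) (Fin d) ℤ) (x : Fin d → ℝ) : ℕ → Torus d :=
  fun n => torusMk d ((((toR A)ᵀ)⁻¹ ^ n).mulVec x)

end

section Statement5Aux

open Polynomial Matrix Filter
open scoped NNReal ENNReal

attribute [local instance] Matrix.linftyOpNormedRing Matrix.linftyOpNormedAlgebra

variable {d : ℕ}

lemma evalCharpoly {n : Type*} [Fintype n] [DecidableEq n] {R : Type*} [CommRing R]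
    (M : Matrix n n R) (μ : R) :
    M.charpoly.eval μ = (μ • (1 : Matrix n n R) - M).det := by
  rw [Matrix.charpoly, ← Polynomial.coe_evalRingHom, RingHom.map_det]
  congr 1
  ext i j
  by_cases h : i = j <;>
    simp [charmatrix_apply, h, Matrix.one_apply, Matrix.diagonal_apply, Matrix.smul_apply,
      Matrix.sub_apply]

lemma det_map_complex (M : Matrix (Fin d) (Fin d) ℝ) :
    (M.map Complex.ofReal).det = Complex.ofReal M.det :=
  (RingHom.map_det Complex.ofRealHom M).symm

lemma algebraMap_matrix_eq (μ : ℂ) :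
    algebraMap ℂ (Matrix (Fin d) (Fin d) ℂ) μ = μ • (1 : Matrix (Fin d) (Fin d) ℂ) := by
  rw [Matrix.algebraMap_eq_diagonal, Matrix.smul_one_eq_diagonal]
  rfl

lemma charpoly_root_abs {A : Matrix (Fin d) (Fin d) ℤ} (hA : Expansive A) {μ : ℂ}
    (h : ((toR A)ᵀ.map Complex.ofReal).charpoly.IsRoot μ) : 1 < ‖μ‖ := by
  apply hA
  have h2 : (toR A)ᵀ.map Complex.ofReal = (A.map (Int.cast : ℤ → ℂ))ᵀ := by
    ext i j
    simp [toR, Matrix.map_apply, Matrix.transpose_apply]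
  rw [h2] at h
  rw [Polynomial.IsRoot, evalCharpoly] at h ⊢
  rw [← Matrix.det_transpose]
  rw [Matrix.transpose_sub, Matrix.transpose_smul, Matrix.transpose_one]
  exact h

lemma det_isUnit {A : Matrix (Fin d) (Fin d) ℤ} (hA : Expansive A) :
    IsUnit ((toR A)ᵀ).det := by
  rw [isUnit_iff_ne_zero]
  intro h0
  have hdetC : ((toR A)ᵀ.map Complex.ofReal).det = 0 := by
    rw [det_map_complex, h0, Complex.ofReal_zero]
  have hroot : ((toR A)ᵀ.map Complex.ofReal).charpoly.IsRoot 0 := by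
    rw [Polynomial.IsRoot, evalCharpoly, zero_smul, zero_sub, Matrix.det_neg, hdetC, mul_zero]
  have := charpoly_root_abs hA hroot
  norm_num at this

lemma map_inv_complex {A : Matrix (Fin d) (Fin d) ℤ} (hA : Expansive A) :
    (((toR A)ᵀ)⁻¹).map Complex.ofReal = (((toR A)ᵀ).map Complex.ofReal)⁻¹ := by
  symm
  apply Matrix.inv_eq_right_inv
  have hmm : ((toR A)ᵀ).map Complex.ofReal * (((toR A)ᵀ)⁻¹).map Complex.ofReal
      = (((toR A)ᵀ) * ((toR A)ᵀ)⁻¹).map Complex.ofReal :=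
    (Matrix.map_mul (f := Complex.ofRealHom)).symm
  rw [hmm, Matrix.mul_nonsing_inv _ (det_isUnit hA)]
  exact Matrix.map_one _ Complex.ofReal_zero Complex.ofReal_one

lemma map_pow_complex (M : Matrix (Fin d) (Fin d) ℝ) (n : ℕ) :
    (M ^ n).map Complex.ofReal = (M.map Complex.ofReal) ^ n := by
  have h1 : (M ^ n).map Complex.ofReal = Complex.ofRealHom.mapMatrix (M ^ n) := rfl
  have h2 : M.map Complex.ofReal = Complex.ofRealHom.mapMatrix M := rfl
  rw [h1, h2, map_pow]

lemma mulVec_map_complex (M : Matrix (Fin d) (Fin d) ℝ) (v : Fin d → ℝ) :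
    (M.map Complex.ofReal) *ᵥ (fun i => (v i : ℂ)) = fun i => ((M *ᵥ v) i : ℂ) := by
  funext i
  simp only [Matrix.mulVec, dotProduct, Matrix.map_apply]
  push_cast
  rfl

/-- Key analytic step: for every vector `u`, some negative power of `Aᵀ` maps `u`
into the open unit cube. -/
lemma exists_small {A : Matrix (Fin d) (Fin d) ℤ} (hA : Expansive A) (u : Fin d → ℝ) :
    ∃ n : ℕ, ∀ i, |((((toR A)ᵀ)⁻¹ ^ n) *ᵥ u) i| < 1 := by
  classical
  set B : Matrix (Fin d) (Fin d) ℂ := (toR A)ᵀ.map Complex.ofReal with hB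
  have hdetB : IsUnit B.det := by
    rw [hB, det_map_complex, isUnit_iff_ne_zero]
    simpa using (det_isUnit hA).ne_zero
  set P : Matrix (Fin d) (Fin d) ℂ := B⁻¹ with hP
  have hPB : P * B = 1 := Matrix.nonsing_inv_mul B hdetB
  have hdetPu : IsUnit P.det := by
    refine IsUnit.of_mul_eq_one B.det ?_
    rw [← Matrix.det_mul, hPB, Matrix.det_one]
  have hPunit : IsUnit P := (Matrix.isUnit_iff_isUnit_det P).mpr hdetPu
  -- Every spectral value of `P` is the inverse of a root of the charpoly of `B`.
  have hspec : ∀ μ ∈ spectrum ℂ P, ∃ z : ℂ, B.charpoly.IsRoot z ∧ μ = z⁻¹ := by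
    intro μ hμ
    have hmem := spectrum.mem_iff.mp hμ
    have hμ0 : μ ≠ 0 := by
      rintro rfl
      apply hmem
      rw [map_zero, zero_sub]
      exact hPunit.neg
    refine ⟨μ⁻¹, ?_, (inv_inv μ).symm⟩
    have halg : algebraMap ℂ (Matrix (Fin d) (Fin d) ℂ) μ = μ • 1 := algebraMap_matrix_eq μ
    have hdet0 : (μ • (1 : Matrix (Fin d) (Fin d) ℂ) - P).det = 0 := by
      by_contra hne
      exact hmem (halg ▸ (Matrix.isUnit_iff_isUnit_det _).mpr (isUnit_iff_ne_zero.2 hne))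
    have hfact : μ • (1 : Matrix (Fin d) (Fin d) ℂ) - P = P * (μ • B - 1) := by
      rw [Matrix.mul_sub, Matrix.mul_smul, hPB, mul_one]
    rw [hfact, Matrix.det_mul] at hdet0
    have hdetP : P.det ≠ 0 := hdetPu.ne_zero
    have hdet1 : (μ • B - 1 : Matrix (Fin d) (Fin d) ℂ).det = 0 := by
      rcases mul_eq_zero.mp hdet0 with h | h
      · exact absurd h hdetP
      · exact h
    have hsm : μ • B - 1 = μ • (B - μ⁻¹ • (1 : Matrix (Fin d) (Fin d) ℂ)) := by
      rw [smul_sub, smul_smul, mul_inv_cancel₀ hμ0, one_smul]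
    rw [hsm, Matrix.det_smul] at hdet1
    have hdet2 : (B - μ⁻¹ • (1 : Matrix (Fin d) (Fin d) ℂ)).det = 0 := by
      rcases mul_eq_zero.mp hdet1 with h | h
      · exact absurd h (pow_ne_zero _ hμ0)
      · exact h
    rw [Polynomial.IsRoot, evalCharpoly]
    rw [show μ⁻¹ • (1 : Matrix (Fin d) (Fin d) ℂ) - B = -(B - μ⁻¹ • 1) by rw [neg_sub]]
    rw [Matrix.det_neg, hdet2, mul_zero]
  -- a bound on the spectral radius
  set c : ℝ≥0 := B.charpoly.roots.toFinset.sup (fun z => ‖z⁻¹‖₊) with hc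
  have hc1 : c < 1 := by
    rw [hc, Finset.sup_lt_iff (show (⊥ : ℝ≥0) < 1 by norm_num)]
    intro z hz
    rw [Multiset.mem_toFinset, Polynomial.mem_roots (Matrix.charpoly_monic B).ne_zero] at hz
    have habs := charpoly_root_abs hA hz
    have hz0 : z ≠ 0 := by
      rintro rfl
      norm_num at habs
    rw [← NNReal.coe_lt_coe]
    simp only [coe_nnnorm, NNReal.coe_one]
    rw [norm_inv]
    rw [inv_lt_one_iff₀]
    right
    exact habs
  have hrad : spectralRadius ℂ P ≤ (c : ENNReal) := by
    refine iSup₂_le fun μ hμ => ?_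
    obtain ⟨z, hz, rfl⟩ := hspec μ hμ
    have hzmem : z ∈ B.charpoly.roots.toFinset := by
      rw [Multiset.mem_toFinset, Polynomial.mem_roots (Matrix.charpoly_monic B).ne_zero]
      exact hz
    exact_mod_cast Finset.le_sup (f := fun z : ℂ => ‖z⁻¹‖₊) hzmem
  -- Gelfand's formula
  haveI : CompleteSpace (Matrix (Fin d) (Fin d) ℂ) := FiniteDimensional.complete ℂ _
  have hgel := spectrum.pow_nnnorm_pow_one_div_tendsto_nhds_spectralRadius P
  set c' : ℝ≥0 := (c + 1) / 2 with hc'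
  have hcoe : (c : ℝ) < 1 := by exact_mod_cast hc1
  have hcc'₁ : c < c' := by
    rw [hc', ← NNReal.coe_lt_coe]
    push_cast
    linarith
  have hcc'₂ : c' < 1 := by
    rw [hc', ← NNReal.coe_lt_coe]
    push_cast
    linarith
  have hev : ∀ᶠ n : ℕ in atTop, (‖P ^ n‖₊ : ENNReal) ^ (1 / (n : ℝ)) < (c' : ENNReal) :=
    hgel.eventually_lt_const (lt_of_le_of_lt hrad (by exact_mod_cast hcc'₁))
  have hub : ∀ᶠ n : ℕ in atTop, ‖P ^ n‖₊ ≤ c' ^ n := by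
    filter_upwards [hev, Filter.eventually_ge_atTop 1] with n hn hn1
    have hne : (n : ℝ) ≠ 0 := by positivity
    have h1 : ((‖P ^ n‖₊ : ENNReal) ^ (1 / (n : ℝ))) ^ (n : ℝ) ≤ (c' : ENNReal) ^ (n : ℝ) :=
      ENNReal.rpow_le_rpow hn.le (by positivity)
    rw [← ENNReal.rpow_mul, one_div, inv_mul_cancel₀ hne, ENNReal.rpow_one] at h1
    rw [ENNReal.rpow_natCast] at h1
    exact_mod_cast h1
  set uc : Fin d → ℂ := fun i => (u i : ℂ) with huc
  have htend : Tendsto (fun n : ℕ => ((c' : ℝ)) ^ n * ‖uc‖) atTop (nhds 0) := by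
    have := (tendsto_pow_atTop_nhds_zero_of_lt_one (by positivity : (0:ℝ) ≤ (c' : ℝ))
      (by exact_mod_cast hcc'₂)).mul_const ‖uc‖
    simpa using this
  have hev2 : ∀ᶠ n : ℕ in atTop, ((c' : ℝ)) ^ n * ‖uc‖ < 1 :=
    htend.eventually_lt_const (by norm_num)
  obtain ⟨n, hn1, hn2⟩ := (hub.and hev2).exists
  refine ⟨n, fun i => ?_⟩
  have hmap : (P ^ n) *ᵥ uc = fun i => (((((toR A)ᵀ)⁻¹ ^ n) *ᵥ u) i : ℂ) := by
    rw [hP, ← map_inv_complex hA, ← map_pow_complex, mulVec_map_complex]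
  calc |((((toR A)ᵀ)⁻¹ ^ n) *ᵥ u) i|
      = ‖((P ^ n) *ᵥ uc) i‖ := by rw [hmap]; simp [Complex.norm_real, Real.norm_eq_abs]
    _ ≤ ‖(P ^ n) *ᵥ uc‖ := norm_le_pi_norm _ i
    _ ≤ ‖P ^ n‖ * ‖uc‖ := Matrix.linfty_opNorm_mulVec _ _
    _ ≤ ((c' : ℝ)) ^ n * ‖uc‖ := by
        apply mul_le_mul_of_nonneg_right _ (norm_nonneg _)
        calc ‖P ^ n‖ = ((‖P ^ n‖₊ : ℝ)) := rfl
          _ ≤ (((c' ^ n : ℝ≥0) : ℝ)) := by exact_mod_cast hn1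
          _ = ((c' : ℝ)) ^ n := by push_cast; ring
    _ < 1 := hn2

lemma vanish {A : Matrix (Fin d) (Fin d) ℤ} (hA : Expansive A) (u : Fin d → ℝ)
    (hu : ∀ n : ℕ, (((toR A)ᵀ)⁻¹ ^ n) *ᵥ u ∈ intLattice d) : u = 0 := by
  obtain ⟨n, hn⟩ := exists_small hA u
  have hz : (((toR A)ᵀ)⁻¹ ^ n) *ᵥ u = 0 := by
    funext i
    obtain ⟨k, hk⟩ := hu n i
    have h1 := hn i
    rw [hk] at h1 ⊢
    have : k = 0 := by
      have h2 : ((|k| : ℤ) : ℝ) < 1 := by rwa [← Int.cast_abs] at h1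
      have h3 : |k| < 1 := by exact_mod_cast h2
      have h4 := abs_lt.mp h3
      omega
    simp [this]
  have h2 : (((toR A)ᵀ ^ n) * (((toR A)ᵀ)⁻¹ ^ n)) *ᵥ u = 0 := by
    rw [← Matrix.mulVec_mulVec, hz, Matrix.mulVec_zero]
  rwa [Matrix.inv_pow', Matrix.mul_nonsing_inv _
    (by simpa [Matrix.det_pow] using (det_isUnit hA).pow n), Matrix.one_mulVec] at h2

lemma fixed_zero {A : Matrix (Fin d) (Fin d) ℤ} (hA : Expansive A) {p : ℕ} (hp : 0 < p)
    (w : Fin d → ℝ) (hw : ((toR A)ᵀ ^ p) *ᵥ w = w) : w = 0 := by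
  classical
  by_contra hne
  set B : Matrix (Fin d) (Fin d) ℂ := (toR A)ᵀ.map Complex.ofReal with hB
  set wc : Fin d → ℂ := fun i => (w i : ℂ) with hwc
  have hwceq : (B ^ p - 1) *ᵥ wc = 0 := by
    rw [Matrix.sub_mulVec, Matrix.one_mulVec, hB, ← map_pow_complex, mulVec_map_complex, hw]
    simp [hwc]
  have hwcne : wc ≠ 0 := by
    intro h
    apply hne
    funext i
    have := congrFun h i
    simpa [hwc] using this
  have hdet : (B ^ p - 1).det = 0 := Matrix.exists_mulVec_eq_zero_iff.mp ⟨wc, hwcne, hwceq⟩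
  have hspec1 : (1 : ℂ) ∈ spectrum ℂ (B ^ p) := by
    rw [spectrum.mem_iff]
    intro hunit
    rw [Matrix.isUnit_iff_isUnit_det] at hunit
    apply hunit.ne_zero
    have hneg : algebraMap ℂ (Matrix (Fin d) (Fin d) ℂ) 1 - B ^ p = -(B ^ p - 1) := by
      rw [_root_.map_one, neg_sub]
    rw [hneg, Matrix.det_neg, hdet, mul_zero]
  rw [spectrum.map_pow_of_pos (𝕜 := ℂ) B hp] at hspec1
  obtain ⟨z, hzspec, hz1⟩ := hspec1
  have hz1' : z ^ p = 1 := hz1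
  have hdetz : (algebraMap ℂ (Matrix (Fin d) (Fin d) ℂ) z - B).det = 0 := by
    by_contra hne2
    exact (spectrum.mem_iff.mp hzspec)
      ((Matrix.isUnit_iff_isUnit_det _).mpr (isUnit_iff_ne_zero.2 hne2))
  have hroot : B.charpoly.IsRoot z := by
    rw [Polynomial.IsRoot, evalCharpoly, ← algebraMap_matrix_eq z]
    exact hdetz
  have habs := charpoly_root_abs hA hroot
  have h1 : (1 : ℝ) < ‖z‖ ^ p := one_lt_pow₀ habs hp.ne'
  rw [← norm_pow, hz1', norm_one] at h1
  exact absurd h1 (by norm_num)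

lemma torusMk_eq_iff {x y : Fin d → ℝ} :
    torusMk d x = torusMk d y ↔ x - y ∈ intLattice d := by
  rw [torusMk, QuotientAddGroup.mk'_eq_mk']
  constructor
  · rintro ⟨z, hz, rfl⟩
    simpa using (intLattice d).neg_mem hz
  · intro h
    exact ⟨y - x, by simpa using (intLattice d).neg_mem h, by abel⟩

lemma torusMk_eq_zero_iff {x : Fin d → ℝ} :
    torusMk d x = 0 ↔ x ∈ intLattice d :=
  QuotientAddGroup.eq_zero_iff x

lemma torusHom_mk (N : Matrix (Fin d) (Fin d) ℤ) (x : Fin d → ℝ) :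
    torusHom N (torusMk d x) = torusMk d ((toR N) *ᵥ x) := rfl


lemma sub_helper {G : Type*} [AddCommGroup G] {a b c d : G} (h : a + b = c + d) :
    d - b = a - c := by
  have hd : d = a + b - c := by rw [h]; abel
  rw [hd]; abel

lemma toR_transpose {d : ℕ} (A : Matrix (Fin d) (Fin d) ℤ) : toR (Aᵀ) = (toR A)ᵀ :=
  Matrix.transpose_map

end Statement5Aux

/-- The set S_A(C) = ⋃_{j} (σ_A^{-j}(χ_C) + î(ℝ^d)), where χ_C is the p-periodic
sequence determined by the cycle ζ and σ_A^{-j} is the j-fold left shift. -/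
def cycleCoset {d : ℕ} (p : ℕ) (A : Matrix (Fin d) (Fin d) ℤ)
    (ζ : ZMod p → Torus d) : Set (ℕ → Torus d) :=
  ⋃ j : ZMod p, Set.range fun x : Fin d → ℝ =>
    (fun n : ℕ => ζ ((n : ZMod p) + j)) + ihat A x

/-- The map î_C : ℝ^d × ℤ/pℤ → S_A(C), î_C(x,j) = σ_A^{-j}(χ_C) + î(x). -/
noncomputable def ihatC {d : ℕ} (p : ℕ) (A : Matrix (Fin d) (Fin d) ℤ)
    (ζ : ZMod p → Torus d) (q : (Fin d → ℝ) × ZMod p) : ℕ → Torus d :=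
  (fun n : ℕ => ζ ((n : ZMod p) + q.2)) + ihat A q.1

/-- î_C is a bijection from ℝ^d × ℤ/pℤ onto S_A(C), and satisfies
î_C(Aᵀx, j−1) = σ_A(î_C(x,j)). -/
theorem statement5 (d : ℕ) (hd : 0 < d) (A : Matrix (Fin d) (Fin d) ℤ)
    (hA : Expansive A) (p : ℕ) (hp : 0 < p) (ζ : ZMod p → Torus d)
    (hζ : ∀ j : ZMod p, torusHom Aᵀ (ζ (j + 1)) = ζ j)
    (hdistinct : Function.Injective ζ) :
    Function.Injective (ihatC p A ζ) ∧
    Set.range (ihatC p A ζ) = cycleCoset p A ζ ∧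
    ∀ (x : Fin d → ℝ) (j : ZMod p),
      ihatC p A ζ ((toR A)ᵀ.mulVec x, j - 1) = sigmaA A (ihatC p A ζ (x, j)) := by
  have hdet : IsUnit ((toR A)ᵀ).det := det_isUnit hA
  have hdetpow : IsUnit (((toR A)ᵀ ^ p)).det := by
    simpa [Matrix.det_pow] using hdet.pow p
  refine ⟨?_, ?_, ?_⟩
  · -- injectivity
    rintro ⟨x, j⟩ ⟨x', j'⟩ h
    have hfun : ∀ n : ℕ, ζ ((n : ZMod p) + j) + torusMk d ((((toR A)ᵀ)⁻¹ ^ n) *ᵥ x)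
        = ζ ((n : ZMod p) + j') + torusMk d ((((toR A)ᵀ)⁻¹ ^ n) *ᵥ x') := by
      intro n
      have h2 := congrFun h n
      simpa [ihatC, ihat, Pi.add_apply] using h2
    have hδ : ∀ n : ℕ, torusMk d ((((toR A)ᵀ)⁻¹ ^ n) *ᵥ (x' - x))
        = ζ ((n : ZMod p) + j) - ζ ((n : ZMod p) + j') := by
      intro n
      rw [Matrix.mulVec_sub, map_sub]
      exact sub_helper (hfun n)
    have hlat : ∀ n : ℕ,
        (((toR A)ᵀ)⁻¹ ^ n) *ᵥ ((x' - x) - (((toR A)ᵀ)⁻¹ ^ p) *ᵥ (x' - x)) ∈ intLattice d := by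
      intro n
      rw [← torusMk_eq_zero_iff]
      rw [Matrix.mulVec_sub, map_sub, Matrix.mulVec_mulVec, ← pow_add, hδ n, hδ (n + p)]
      have hcast : ((n + p : ℕ) : ZMod p) = (n : ZMod p) := by
        push_cast [ZMod.natCast_self]; ring
      rw [hcast]
      abel
    have hu0 := vanish hA _ hlat
    have h5 : x' - x = (((toR A)ᵀ)⁻¹ ^ p) *ᵥ (x' - x) := sub_eq_zero.mp hu0
    have h6 := congrArg (fun v => ((toR A)ᵀ ^ p) *ᵥ v) h5
    simp only [Matrix.mulVec_mulVec] at h6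
    rw [Matrix.inv_pow', Matrix.mul_nonsing_inv _ hdetpow, Matrix.one_mulVec] at h6
    have hw0 := fixed_zero hA hp _ h6
    have hxx : x = x' := (sub_eq_zero.mp hw0).symm
    have hjj : j = j' := by
      have h0 := hfun 0
      rw [hxx] at h0
      have h1 := add_right_cancel h0
      simp only [Nat.cast_zero, zero_add] at h1
      exact hdistinct h1
    rw [hxx, hjj]
  · -- range
    ext z
    constructor
    · rintro ⟨⟨x, j⟩, rfl⟩
      exact Set.mem_iUnion.2 ⟨j, Set.mem_range.2 ⟨x, rfl⟩⟩
    · intro hz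
      obtain ⟨j, hj⟩ := Set.mem_iUnion.mp (hz : z ∈ ⋃ j : ZMod p, Set.range fun x : Fin d → ℝ =>
        (fun n : ℕ => ζ ((n : ZMod p) + j)) + ihat A x)
      obtain ⟨x, hx⟩ := Set.mem_range.mp hj
      exact ⟨(x, j), hx⟩
  · -- equivariance
    intro x j
    funext n
    cases n with
    | zero =>
      show ζ (((0 : ℕ) : ZMod p) + (j - 1)) + torusMk d ((((toR A)ᵀ)⁻¹ ^ 0) *ᵥ ((toR A)ᵀ *ᵥ x))
          = torusHom Aᵀ (ζ (((0 : ℕ) : ZMod p) + j) + torusMk d ((((toR A)ᵀ)⁻¹ ^ 0) *ᵥ x))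
      rw [pow_zero, Matrix.one_mulVec, Matrix.one_mulVec, Nat.cast_zero, zero_add, zero_add,
        map_add, torusHom_mk, toR_transpose]
      congr 1
      rw [← hζ (j - 1), sub_add_cancel]
    | succ n =>
      show ζ (((n + 1 : ℕ) : ZMod p) + (j - 1))
            + torusMk d ((((toR A)ᵀ)⁻¹ ^ (n + 1)) *ᵥ ((toR A)ᵀ *ᵥ x))
          = ζ (((n : ℕ) : ZMod p) + j) + torusMk d ((((toR A)ᵀ)⁻¹ ^ n) *ᵥ x)
      congr 1
      · congr 1
        push_cast
        ring
      · rw [Matrix.mulVec_mulVec, pow_succ, Matrix.mul_assoc,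
          Matrix.nonsing_inv_mul _ hdet, Matrix.mul_one]
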